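/- arXiv:1502.05591 — 3 statements merged into one kernel-verified Lean document; each statement's English description precedes it below -/
import Mathlib

section
/- There is no p∈[1,∞] and no norm ‖·‖_p on ℝ² such that for all u_1,u_2∈ℝ: max{0,1-|u_1|}·max{0,1-|u_2|} = max{0,1-‖(u_1,u_2)‖_p}. More generally, there is no norm N on ℝ² such that max{0,1-|u_1|}·max{0,1-|u_2|} = max{0,1-N(u_1,u_2)} for all (u_1,u_2)∈ℝ². -/
/-- There is no norm `N` on ℝ² such that
`max 0 (1-|u₁|) * max 0 (1-|u₂|) = max 0 (1 - N (u₁,u₂))` for all `(u₁,u₂)`;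
i.e. the product of two triangular membership functions is not a radial
function of any norm. -/
theorem product_of_triangles_not_radial :
    ¬ ∃ N : ℝ → ℝ → ℝ,
      (∀ u v, 0 ≤ N u v) ∧
      (∀ u v, N u v = 0 ↔ (u = 0 ∧ v = 0)) ∧
      (∀ (c u v : ℝ), N (c * u) (c * v) = |c| * N u v) ∧
      (∀ u₁ v₁ u₂ v₂, N (u₁ + u₂) (v₁ + v₂) ≤ N u₁ v₁ + N u₂ v₂) ∧
      (∀ u v : ℝ,
        max 0 (1 - |u|) * max 0 (1 - |v|) = max 0 (1 - N u v)) := by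
  rintro ⟨N, hpos, hzero, hhom, htri, heq⟩
  have ha2 : |(1/2:ℝ)| = 1/2 := by norm_num
  have ha4 : |(1/4:ℝ)| = 1/4 := by norm_num
  have h1 := heq (1/2) (1/2)
  have h2 := heq (1/4) (1/4)
  rw [ha2] at h1
  rw [ha4] at h2
  have e1 : N (1/2) (1/2) = 3/4 := by
    rcases max_cases (0:ℝ) (1 - N (1/2) (1/2)) with ⟨hm, hm'⟩ | ⟨hm, hm'⟩ <;>
      rw [hm] at h1 <;> norm_num at h1 <;> linarith
  have e2 : N (1/4) (1/4) = 7/16 := by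
    rcases max_cases (0:ℝ) (1 - N (1/4) (1/4)) with ⟨hm, hm'⟩ | ⟨hm, hm'⟩ <;>
      rw [hm] at h2 <;> norm_num at h2 <;> linarith
  have g1 := hhom (1/2) 1 1
  have g2 := hhom (1/4) 1 1
  rw [ha2] at g1
  rw [ha4] at g2
  norm_num at g1 g2
  rw [e1] at g1
  rw [e2] at g2
  linarith
end

section
/- Let T be a continuous Archimedean t-norm with continuous additive generator t and pseudo-inverse t^(-1). Fix q>0, p∈[1,∞), and define act(z) = t^(-1)(q z^p). Define A_{ji}(x_i) = act(|x_i - a_{ji}|/b_{ji}) with b_{ji}>0. Then the antecedent A_j(x) = T(A_{j1}(x_1),...,A_{jn}(x_n)) satisfies the radial property: A_j(x) = act(‖x - a_j‖_{p,b_j}), where ‖u‖_{p,b} = (Σ_i |u_i/b_i|^p)^{1/p}. -/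
open Set ENNReal

/-- The n-ary extension of a binary operation by associativity. -/
def tnormFold (T : ℝ → ℝ → ℝ) : List ℝ → ℝ
  | [] => 1
  | [a] => a
  | a :: b :: rest => T a (tnormFold T (b :: rest))

lemma min_add_min_key (t0 z w : ℝ≥0∞) :
    min t0 (min t0 z + min t0 w) = min t0 (z + w) := by
  rcases le_total z t0 with hz | hz <;> rcases le_total w t0 with hw | hw
  · rw [min_eq_right hz, min_eq_right hw]
  · rw [min_eq_right hz, min_eq_left hw, min_eq_left le_add_self,
      min_eq_left (hw.trans le_add_self)]
  · rw [min_eq_right hw, min_eq_left hz, min_eq_left le_self_add,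
      min_eq_left (hz.trans le_self_add)]
  · rw [min_eq_left hz, min_eq_left hw, min_eq_left le_self_add,
      min_eq_left (hz.trans le_self_add)]

/-- For a continuous Archimedean t-norm `T` with additive generator `t` and
pseudo-inverse `tinv`, the `act` function `act z = tinv (q z^p)` makes the
antecedent `T(A_{j1}(x₁),...,A_{jn}(xₙ))` with
`A_{ji}(xᵢ) = act(|xᵢ - aᵢ|/bᵢ)` satisfy the radial property with the scaled
ℓ_p norm. -/
theorem archimedean_tnorm_radial_property
    (T : ℝ → ℝ → ℝ) (t : ℝ → ℝ≥0∞) (tinv : ℝ≥0∞ → ℝ)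
    (hcont : ContinuousOn t (Icc (0:ℝ) 1))
    (hanti : StrictAntiOn t (Icc (0:ℝ) 1))
    (ht1 : t 1 = 0)
    (htinv : ∀ z : ℝ≥0∞, tinv z ∈ Icc (0:ℝ) 1 ∧ t (tinv z) = min (t 0) z)
    (hT : ∀ a ∈ Icc (0:ℝ) 1, ∀ b ∈ Icc (0:ℝ) 1, T a b = tinv (t a + t b))
    (q p : ℝ) (hq : 0 < q) (hp : 1 ≤ p)
    (act : ℝ → ℝ) (hact : ∀ z, act z = tinv (ENNReal.ofReal (q * z ^ p)))
    (n : ℕ) (hn : 0 < n)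
    (a b : Fin n → ℝ) (hb : ∀ i, 0 < b i) (x : Fin n → ℝ) :
    tnormFold T (List.ofFn (fun i => act (|x i - a i| / b i)))
      = act ((∑ i, (|x i - a i| / b i) ^ p) ^ (1 / p)) := by
  have hinj : ∀ z w : ℝ≥0∞, min (t 0) z = min (t 0) w → tinv z = tinv w := by
    intro z w h
    exact hanti.injOn (htinv z).1 (htinv w).1 (by rw [(htinv z).2, (htinv w).2, h])
  have hstep : ∀ z w : ℝ≥0∞, T (tinv z) (tinv w) = tinv (z + w) := by
    intro z w
    rw [hT _ (htinv z).1 _ (htinv w).1, (htinv z).2, (htinv w).2]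
    exact hinj _ _ (min_add_min_key _ _ _)
  have main : ∀ l : List ℝ, l ≠ [] →
      tnormFold T (l.map (fun c => tinv (ENNReal.ofReal (q * c ^ p))))
        = tinv ((l.map (fun c => ENNReal.ofReal (q * c ^ p))).sum) := by
    intro l hl
    induction l with
    | nil => simp at hl
    | cons c rest ih =>
      cases rest with
      | nil => simp [tnormFold]
      | cons d rest' =>
        simp only [List.map_cons, tnormFold, List.sum_cons]
        have h2 := ih (by simp)
        simp only [List.map_cons, tnormFold, List.sum_cons] at h2
        rw [h2, hstep]
  have hc : ∀ i : Fin n, (0:ℝ) ≤ |x i - a i| / b i := fun i =>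
    div_nonneg (abs_nonneg _) (hb i).le
  have hofn : (List.ofFn fun i => act (|x i - a i| / b i))
      = (List.ofFn fun i => |x i - a i| / b i).map
          (fun c => tinv (ENNReal.ofReal (q * c ^ p))) := by
    rw [List.map_ofFn]
    congr 1
    funext i
    exact hact _
  have hnil : (List.ofFn fun i : Fin n => |x i - a i| / b i) ≠ [] := by
    simp [List.ofFn_eq_nil_iff, hn.ne']
  rw [hofn, main _ hnil, hact]
  congr 1
  have hS : (0:ℝ) ≤ ∑ i, (|x i - a i| / b i) ^ p :=
    Finset.sum_nonneg fun i _ => Real.rpow_nonneg (hc i) _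
  have hpne : p ≠ 0 := by linarith
  have h1 : ((∑ i, (|x i - a i| / b i) ^ p) ^ (1 / p)) ^ p
      = ∑ i, (|x i - a i| / b i) ^ p := by
    rw [← Real.rpow_mul hS, one_div_mul_cancel hpne, Real.rpow_one]
  rw [h1, List.map_ofFn, List.sum_ofFn, Finset.mul_sum,
    ENNReal.ofReal_sum_of_nonneg (fun i _ => mul_nonneg hq.le (Real.rpow_nonneg (hc i) _))]
  rfl
end

section
/- Consider m rules with parameters a_j∈ℝⁿ, b_j∈ℝ₊ⁿ, c_j∈ℝ, d_j>0, s_j≥0, and for x∈ℝⁿ define I_j⁺(x) = [c_j - d_j‖x-a_j‖_{p,b_j} - s_j, c_j + d_j‖x-a_j‖_{p,b_j} + s_j]. If for every pair j,k ∈ {1,...,m}: |c_j - c_k| - (s_j + s_k) ≤ min{d_j α_j, d_k α_k}·‖a_j - a_k‖_p, where α_j = 1/max_i b_{ji} and ‖·‖_p is the unscaled ℓ_p norm, then ⋂_{j=1}^m I_j⁺(x) ≠ ∅ for every x ∈ ℝⁿ. -/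
open Set Finset

lemma scaled_norm_le (n : ℕ) (hnne : (Finset.univ : Finset (Fin n)).Nonempty)
    (p : ℝ) (hp : 1 ≤ p) (b : Fin n → ℝ) (hb : ∀ i, 0 < b i) (u : Fin n → ℝ) :
    (Finset.univ.sup' hnne b)⁻¹ * (∑ i, |u i| ^ p) ^ (1 / p) ≤
      (∑ i, (|u i| / b i) ^ p) ^ (1 / p) := by
  set M := Finset.univ.sup' hnne b with hM
  have hp0 : (0:ℝ) < p := lt_of_lt_of_le one_pos hp
  obtain ⟨i0, _, hi0⟩ := Finset.exists_mem_eq_sup' hnne b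
  have hMpos : 0 < M := by rw [hM, hi0]; exact hb i0
  have key : M⁻¹ * (∑ i, |u i| ^ p) ^ (1 / p) = (∑ i, (|u i| / M) ^ p) ^ (1 / p) := by
    have : ∀ i : Fin n, (|u i| / M) ^ p = (M⁻¹) ^ p * |u i| ^ p := fun i => by
      rw [div_eq_inv_mul, Real.mul_rpow (inv_nonneg.2 hMpos.le) (abs_nonneg _)]
    simp_rw [this, ← Finset.mul_sum]
    rw [Real.mul_rpow (Real.rpow_nonneg (inv_nonneg.2 hMpos.le) _)
      (Finset.sum_nonneg fun i _ => Real.rpow_nonneg (abs_nonneg _) _),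
      ← Real.rpow_mul (inv_nonneg.2 hMpos.le), mul_one_div, div_self hp0.ne', Real.rpow_one]
  rw [key]
  apply Real.rpow_le_rpow (Finset.sum_nonneg fun i _ => Real.rpow_nonneg (by positivity) _)
    _ (by positivity)
  apply Finset.sum_le_sum
  intro i _
  apply Real.rpow_le_rpow (by positivity) _ hp0.le
  exact div_le_div_of_nonneg_left (abs_nonneg _) (hb i) (Finset.le_sup' b (Finset.mem_univ i))

/-- Sufficient condition for coherence of a radial implicative fuzzy system:
if for every pair of rules `j,k`,
`|c_j - c_k| - (s_j + s_k) ≤ min{d_j α_j, d_k α_k} · ‖a_j - a_k‖_p` where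
`α_j = 1 / max_i b_{ji}`, then the intersection of the positive output
intervals `I_j⁺(x)` is nonempty for every input `x`. -/
theorem radial_coherence_sufficient
    (n m : ℕ) (hnne : (Finset.univ : Finset (Fin n)).Nonempty)
    (p : ℝ) (hp : 1 ≤ p)
    (a : Fin m → Fin n → ℝ) (b : Fin m → Fin n → ℝ) (hb : ∀ j i, 0 < b j i)
    (c d s : Fin m → ℝ) (hd : ∀ j, 0 < d j) (hs : ∀ j, 0 ≤ s j)
    (hcoh : ∀ j k : Fin m,
      |c j - c k| - (s j + s k) ≤
        min (d j * (Finset.univ.sup' hnne (b j))⁻¹)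
            (d k * (Finset.univ.sup' hnne (b k))⁻¹)
          * (∑ i, |a j i - a k i| ^ p) ^ (1 / p)) :
    ∀ x : Fin n → ℝ,
      (⋂ j, Icc
        (c j - d j * (∑ i, (|x i - a j i| / b j i) ^ p) ^ (1 / p) - s j)
        (c j + d j * (∑ i, (|x i - a j i| / b j i) ^ p) ^ (1 / p) + s j)).Nonempty := by
  intro x
  rcases Nat.eq_zero_or_pos m with hm | hm
  · subst hm
    exact ⟨0, by simp⟩
  have : Nonempty (Fin m) := Fin.pos_iff_nonempty.mp hm
  have hmne : (Finset.univ : Finset (Fin m)).Nonempty := Finset.univ_nonempty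
  set N : Fin m → ℝ := fun j => (∑ i, (|x i - a j i| / b j i) ^ p) ^ (1 / p) with hN
  have hNnn : ∀ j, 0 ≤ N j := fun j =>
    Real.rpow_nonneg (Finset.sum_nonneg fun i _ => Real.rpow_nonneg (div_nonneg (abs_nonneg _) (hb j i).le) _) _
  -- key: L j ≤ U k for all j k
  have key : ∀ j k : Fin m,
      c j - d j * N j - s j ≤ c k + d k * N k + s k := by
    intro j k
    set Mj := (Finset.univ.sup' hnne (b j))⁻¹
    set Mk := (Finset.univ.sup' hnne (b k))⁻¹
    have hMjpos : 0 < (Finset.univ.sup' hnne (b j)) := by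
      obtain ⟨i0, _, hi0⟩ := Finset.exists_mem_eq_sup' hnne (b j)
      rw [hi0]; exact hb j i0
    have hMkpos : 0 < (Finset.univ.sup' hnne (b k)) := by
      obtain ⟨i0, _, hi0⟩ := Finset.exists_mem_eq_sup' hnne (b k)
      rw [hi0]; exact hb k i0
    have hAnn : (0:ℝ) ≤ (∑ i, |x i - a j i| ^ p) ^ (1 / p) :=
      Real.rpow_nonneg (Finset.sum_nonneg fun i _ => Real.rpow_nonneg (abs_nonneg _) _) _
    have hBnn : (0:ℝ) ≤ (∑ i, |x i - a k i| ^ p) ^ (1 / p) :=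
      Real.rpow_nonneg (Finset.sum_nonneg fun i _ => Real.rpow_nonneg (abs_nonneg _) _) _
    have htri : (∑ i, |a j i - a k i| ^ p) ^ (1 / p) ≤
        (∑ i, |x i - a j i| ^ p) ^ (1 / p) + (∑ i, |x i - a k i| ^ p) ^ (1 / p) := by
      have := Real.Lp_add_le Finset.univ (fun i => -(x i - a j i)) (fun i => x i - a k i) hp
      simp only [abs_neg] at this
      convert this using 3 with i
      ring_nf
    have hmin := hcoh j k
    have step : |c j - c k| - (s j + s k) ≤ d j * N j + d k * N k := by
      refine hmin.trans ?_
      have h1 : min (d j * Mj) (d k * Mk) * ((∑ i, |a j i - a k i| ^ p) ^ (1 / p)) ≤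
          min (d j * Mj) (d k * Mk) *
            ((∑ i, |x i - a j i| ^ p) ^ (1 / p) + (∑ i, |x i - a k i| ^ p) ^ (1 / p)) := by
        apply mul_le_mul_of_nonneg_left htri
        exact le_min (mul_nonneg (hd j).le (inv_nonneg.2 hMjpos.le)) (mul_nonneg (hd k).le (inv_nonneg.2 hMkpos.le))
      refine h1.trans ?_
      rw [mul_add]
      apply add_le_add
      · calc min (d j * Mj) (d k * Mk) * (∑ i, |x i - a j i| ^ p) ^ (1 / p)
            ≤ (d j * Mj) * (∑ i, |x i - a j i| ^ p) ^ (1 / p) :=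
              mul_le_mul_of_nonneg_right (min_le_left _ _) hAnn
          _ = d j * (Mj * (∑ i, |x i - a j i| ^ p) ^ (1 / p)) := by ring
          _ ≤ d j * N j := by
              apply mul_le_mul_of_nonneg_left _ (hd j).le
              exact scaled_norm_le n hnne p hp (b j) (hb j) (fun i => x i - a j i)
      · calc min (d j * Mj) (d k * Mk) * (∑ i, |x i - a k i| ^ p) ^ (1 / p)
            ≤ (d k * Mk) * (∑ i, |x i - a k i| ^ p) ^ (1 / p) :=
              mul_le_mul_of_nonneg_right (min_le_right _ _) hBnn
          _ = d k * (Mk * (∑ i, |x i - a k i| ^ p) ^ (1 / p)) := by ring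
          _ ≤ d k * N k := by
              apply mul_le_mul_of_nonneg_left _ (hd k).le
              exact scaled_norm_le n hnne p hp (b k) (hb k) (fun i => x i - a k i)
    have habs : c j - c k - (s j + s k) ≤ |c j - c k| - (s j + s k) := by
      have := le_abs_self (c j - c k); linarith
    linarith
  set t := Finset.univ.sup' hmne (fun j => c j - d j * N j - s j) with ht
  refine ⟨t, Set.mem_iInter.2 fun j => ?_⟩
  constructor
  · exact Finset.le_sup' (fun j => c j - d j * N j - s j) (Finset.mem_univ j)
  · apply Finset.sup'_le
    intro k _
    exact key k j
end
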